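/- Let a, b be rational numbers with a⁵·b⁵·(b² − 11ab − a²) ≠ 0. Then the point (0, 0) on the elliptic curve y² + (a−b)·xy − a²b·y = x³ − ab·x² over ℚ has order exactly 5 in the group of rational points. -/

import Mathlib

open WeierstrassCurve.Affine WeierstrassCurve.Affine.Point
theorem stmt_10 (a b : ℚ) (hΔ : a ^ 5 * b ^ 5 * (b ^ 2 - 11 * a * b - a ^ 2) ≠ 0)
    (h : (⟨a - b, -(a * b), -(a ^ 2 * b), 0, 0⟩ :
      WeierstrassCurve ℚ).toAffine.Nonsingular 0 0) :
    addOrderOf (WeierstrassCurve.Affine.Point.some _ _ h) = 5 := by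
  have ha : a ≠ 0 := fun h0 => hΔ (by rw [h0]; ring)
  have hb : b ≠ 0 := fun h0 => hΔ (by rw [h0]; ring)
  let W : WeierstrassCurve.Affine ℚ :=
    (⟨a - b, -(a * b), -(a ^ 2 * b), 0, 0⟩ : WeierstrassCurve ℚ).toAffine
  have hW : W = (⟨a - b, -(a * b), -(a ^ 2 * b), 0, 0⟩ : WeierstrassCurve ℚ).toAffine := rfl
  have hy1 : (0 : ℚ) ≠ W.negY 0 0 := by
    simp only [negY, hW]
    intro hc
    have h0 : a ^ 2 * b = 0 := by linear_combination -hc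
    rcases mul_eq_zero.mp h0 with h' | h'
    · exact ha (pow_eq_zero_iff two_ne_zero |>.mp h')
    · exact hb h'
  have hs1 : W.slope 0 0 0 0 = 0 := by
    rw [slope_of_Y_ne rfl hy1]
    simp [hW]
  have hx2 : W.addX 0 0 (W.slope 0 0 0 0) = a * b := by
    rw [hs1]; simp [addX, hW]
  have hy2 : W.addY 0 0 0 (W.slope 0 0 0 0) = a * b ^ 2 := by
    rw [addY, negAddY, hx2, hs1]
    simp only [negY, hW]
    ring
  have hyQ : a * b ^ 2 ≠ W.negY (a * b) (a * b ^ 2) := by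
    simp only [negY, hW]
    intro hc
    have h0 : 2 * (a * b ^ 2) = 0 := by linear_combination 2 * hc
    have h1 : a * b ^ 2 = 0 := by linarith
    rcases mul_eq_zero.mp h1 with h' | h'
    · exact ha h'
    · exact hb (pow_eq_zero_iff two_ne_zero |>.mp h')
  have hs2 : W.slope (a * b) (a * b) (a * b ^ 2) (a * b ^ 2) = b := by
    rw [slope_of_Y_ne rfl hyQ]
    simp only [negY, hW]
    rw [div_eq_iff (by intro hc; apply hyQ; simp only [negY, hW]; linarith)]
    ring
  have hx4 : W.addX (a * b) (a * b) (W.slope (a * b) (a * b) (a * b ^ 2) (a * b ^ 2)) = 0 := by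
    rw [hs2]; simp only [addX, hW]; ring
  have hy4 : W.addY (a * b) (a * b) (a * b ^ 2)
      (W.slope (a * b) (a * b) (a * b ^ 2) (a * b ^ 2)) = W.negY 0 0 := by
    rw [addY, negAddY, hx4, hs2]
    simp only [negY, hW]
    ring
  haveI : Fact (Nat.Prime 5) := ⟨by norm_num⟩
  refine addOrderOf_eq_prime ?_ (some_ne_zero h)
  have hyK : W.addY 0 0 0 (W.slope 0 0 0 0) ≠
      W.negY (W.addX 0 0 (W.slope 0 0 0 0)) (W.addY 0 0 0 (W.slope 0 0 0 0)) := by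
    rw [hx2, hy2]; exact hyQ
  have hx0 : W.addX (W.addX 0 0 (W.slope 0 0 0 0)) (W.addX 0 0 (W.slope 0 0 0 0))
      (W.slope (W.addX 0 0 (W.slope 0 0 0 0)) (W.addX 0 0 (W.slope 0 0 0 0))
        (W.addY 0 0 0 (W.slope 0 0 0 0)) (W.addY 0 0 0 (W.slope 0 0 0 0))) = 0 := by
    rw [hx2, hy2]; exact hx4
  have hy0 : W.addY (W.addX 0 0 (W.slope 0 0 0 0)) (W.addX 0 0 (W.slope 0 0 0 0))
      (W.addY 0 0 0 (W.slope 0 0 0 0))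
      (W.slope (W.addX 0 0 (W.slope 0 0 0 0)) (W.addX 0 0 (W.slope 0 0 0 0))
        (W.addY 0 0 0 (W.slope 0 0 0 0)) (W.addY 0 0 0 (W.slope 0 0 0 0))) = W.negY 0 0 := by
    rw [hx2, hy2]; exact hy4
  show 5 • Point.some _ _ h = 0
  rw [show (5 : ℕ) = 2 + 2 + 1 from rfl, add_nsmul, add_nsmul, one_nsmul, two_nsmul]
  rw [add_self_of_Y_ne hy1, add_self_of_Y_ne hyK]
  exact add_of_Y_eq hx0 hy0
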